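/- Let G = (V,E) be a finite simple undirected graph with adjacency matrix A and let β ≥ 1 be a real number. If x ∈ {0,1}^V attains the minimum of the function x ↦ −∑_{i∈V} x_i + β·xᵀAx over {0,1}^V, then the support S = {i ∈ V : x_i = 1} is a stable set of G of maximum cardinality, i.e. |S| = α(G). -/

import Mathlib

open Matrix BigOperators

/-- A set of vertices is stable (independent) if its vertices are pairwise nonadjacent. -/
def IsStableSet {V : Type*} (G : SimpleGraph V) (s : Set V) : Prop :=
  s.Pairwise fun i j => ¬ G.Adj i j

/-- The stability number α(G): the maximum cardinality of a stable set. -/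
noncomputable def stabilityNumber {V : Type*} [Fintype V] (G : SimpleGraph V) : ℕ :=
  sSup {n : ℕ | ∃ s : Finset V, IsStableSet G ↑s ∧ s.card = n}

/-- If a binary vector `x` minimizes `-∑ x_i + β·xᵀAx` over binary vectors (`β ≥ 1`),
then its support is a maximum stable set of `G`. -/
theorem support_of_qubo_minimizer_isMaxStableSet {V : Type*} [Fintype V] [DecidableEq V]
    (G : SimpleGraph V) [DecidableRel G.Adj] (β : ℝ) (hβ : 1 ≤ β)
    (x : V → ℝ) (hx : ∀ i, x i = 0 ∨ x i = 1)
    (hmin : ∀ y : V → ℝ, (∀ i, y i = 0 ∨ y i = 1) →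
      -(∑ i, x i) + β * (x ⬝ᵥ (G.adjMatrix ℝ) *ᵥ x) ≤
        -(∑ i, y i) + β * (y ⬝ᵥ (G.adjMatrix ℝ) *ᵥ y)) :
    IsStableSet G {i | x i = 1} ∧ {i | x i = 1}.ncard = stabilityNumber G := by
  classical
  set A := G.adjMatrix ℝ with hA
  have quad : ∀ y : V → ℝ, y ⬝ᵥ A *ᵥ y = ∑ k, ∑ l, y k * (A k l * y l) := by
    intro y
    simp [dotProduct, mulVec, Finset.mul_sum]
  have Anonneg : ∀ k l, 0 ≤ A k l := by
    intro k l
    rw [hA, SimpleGraph.adjMatrix_apply]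
    split_ifs <;> norm_num
  have hb0 : ∀ {z : V → ℝ}, (∀ i, z i = 0 ∨ z i = 1) → ∀ i, 0 ≤ z i := by
    intro z hz i; rcases hz i with h | h <;> rw [h] <;> norm_num
  -- Part 1: support is stable
  have hstable : IsStableSet G {i | x i = 1} := by
    intro i hi j hj hij hadj
    simp only [Set.mem_setOf_eq] at hi hj
    set y : V → ℝ := Function.update x i 0 with hy
    have hyb : ∀ k, y k = 0 ∨ y k = 1 := by
      intro k
      by_cases hk : k = i
      · subst hk; left; simp [hy]
      · rw [hy, Function.update_of_ne hk]; exact hx k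
    have hle : ∀ k, y k ≤ x k := by
      intro k
      by_cases hk : k = i
      · subst hk; simp [hy, hi]
      · rw [hy, Function.update_of_ne hk]
    have hsum : ∑ k, y k = (∑ k, x k) - 1 := by
      rw [hy, Finset.sum_update_of_mem (Finset.mem_univ i)]
      rw [Finset.sum_sdiff_eq_sub (Finset.singleton_subset_iff.2 (Finset.mem_univ i))]
      simp [hi]
    -- termwise inequality
    have hterm : ∀ k l, y k * (A k l * y l) ≤ x k * (A k l * x l) := by
      intro k l
      exact mul_le_mul (hle k) (mul_le_mul_of_nonneg_left (hle l) (Anonneg k l))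
        (mul_nonneg (Anonneg k l) (hb0 hyb l)) (hb0 hx k)
    have g_nonneg : ∀ k, 0 ≤ ∑ l, (x k * (A k l * x l) - y k * (A k l * y l)) := by
      intro k
      apply Finset.sum_nonneg
      intro l _
      linarith [hterm k l]
    have gi : (1 : ℝ) ≤ ∑ l, (x i * (A i l * x l) - y i * (A i l * y l)) := by
      have h1 : x i * (A i j * x j) - y i * (A i j * y j) = 1 := by
        have : A i j = 1 := by rw [hA]; simp [hadj]
        simp [this, hi, hj, hy]
      calc (1:ℝ) = x i * (A i j * x j) - y i * (A i j * y j) := h1.symm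
        _ ≤ _ := Finset.single_le_sum (f := fun l => x i * (A i l * x l) - y i * (A i l * y l)) (fun l _ => sub_nonneg.mpr (hterm i l)) (Finset.mem_univ j)
    have gj : (1 : ℝ) ≤ ∑ l, (x j * (A j l * x l) - y j * (A j l * y l)) := by
      have h1 : x j * (A j i * x i) - y j * (A j i * y i) = 1 := by
        have : A j i = 1 := by rw [hA]; simp [hadj.symm]
        have hyi : y i = 0 := by simp [hy]
        have hyj : y j = x j := by rw [hy, Function.update_of_ne (Ne.symm hij)]
        simp [this, hi, hj, hyi, hyj]
      calc (1:ℝ) = x j * (A j i * x i) - y j * (A j i * y i) := h1.symm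
        _ ≤ _ := Finset.single_le_sum (f := fun l => x j * (A j l * x l) - y j * (A j l * y l)) (fun l _ => sub_nonneg.mpr (hterm j l)) (Finset.mem_univ i)
    have hQ : y ⬝ᵥ A *ᵥ y ≤ x ⬝ᵥ A *ᵥ x - 2 := by
      rw [quad x, quad y]
      have hsplit : (2:ℝ) ≤ ∑ k, ∑ l, (x k * (A k l * x l) - y k * (A k l * y l)) := by
        have hsub : ({i, j} : Finset V) ⊆ Finset.univ := Finset.subset_univ _
        have := Finset.sum_le_sum_of_subset_of_nonneg hsub
          (fun k _ _ => g_nonneg k)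
        have hpair : ∑ k ∈ ({i, j} : Finset V),
            ∑ l, (x k * (A k l * x l) - y k * (A k l * y l)) =
            (∑ l, (x i * (A i l * x l) - y i * (A i l * y l))) +
            (∑ l, (x j * (A j l * x l) - y j * (A j l * y l))) := by
          rw [Finset.sum_pair hij]
        linarith
      have : ∑ k, ∑ l, (x k * (A k l * x l) - y k * (A k l * y l)) =
          (∑ k, ∑ l, x k * (A k l * x l)) - ∑ k, ∑ l, y k * (A k l * y l) := by
        rw [← Finset.sum_sub_distrib]
        congr 1; ext k; rw [Finset.sum_sub_distrib]
      linarith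
    have := hmin y hyb
    rw [hsum] at this
    nlinarith [this, hQ]
  -- Part 2: the quadratic form vanishes at x
  have hQx : x ⬝ᵥ A *ᵥ x = 0 := by
    rw [quad x]
    apply Finset.sum_eq_zero
    intro k _
    apply Finset.sum_eq_zero
    intro l _
    rcases hx k with hk | hk
    · rw [hk, zero_mul]
    rcases hx l with hl | hl
    · rw [hl, mul_zero, mul_zero]
    have hAkl : A k l = 0 := by
      by_cases hkl : k = l
      · subst hkl; rw [hA]; simp
      · rw [hA, SimpleGraph.adjMatrix_apply, if_neg]
        exact hstable hk hl hkl
    rw [hAkl, zero_mul, mul_zero]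
  -- the support finset
  set S : Finset V := Finset.univ.filter (fun i => x i = 1) with hS
  have hSset : {i | x i = 1} = ↑S := by
    ext i; simp [hS]
  have hsumx : ∑ k, x k = (S.card : ℝ) := by
    have : ∀ k, x k = if x k = 1 then (1:ℝ) else 0 := by
      intro k; rcases hx k with h | h <;> simp [h]
    rw [Finset.sum_congr rfl (fun k _ => this k)]
    rw [Finset.sum_boole]
  -- Part 4: any stable finset has card ≤ S.card
  have hmax : ∀ s : Finset V, IsStableSet G ↑s → s.card ≤ S.card := by
    intro s hs
    set y : V → ℝ := fun i => if i ∈ s then 1 else 0 with hy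
    have hyb : ∀ k, y k = 0 ∨ y k = 1 := by
      intro k; rw [hy]; dsimp only; split_ifs <;> simp
    have hsumy : ∑ k, y k = (s.card : ℝ) := by
      rw [hy, Finset.sum_boole]; congr 1; simp
    have hQy : y ⬝ᵥ A *ᵥ y = 0 := by
      rw [quad y]
      apply Finset.sum_eq_zero; intro k _
      apply Finset.sum_eq_zero; intro l _
      rw [hy]; dsimp only
      by_cases hk : k ∈ s
      · by_cases hl : l ∈ s
        · have hAkl : A k l = 0 := by
            by_cases hkl : k = l
            · subst hkl; rw [hA]; simp
            · rw [hA, SimpleGraph.adjMatrix_apply, if_neg]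
              exact hs hk hl hkl
          simp [hAkl]
        · simp [hl]
      · simp [hk]
    have := hmin y hyb
    rw [hQx, hsumy, hsumx, hQy] at this
    have hcard : (s.card : ℝ) ≤ (S.card : ℝ) := by linarith
    exact_mod_cast hcard
  refine ⟨hstable, ?_⟩
  have hSstable : IsStableSet G ↑S := by rw [← hSset]; exact hstable
  have hmem : S.card ∈ {n : ℕ | ∃ s : Finset V, IsStableSet G ↑s ∧ s.card = n} :=
    ⟨S, hSstable, rfl⟩
  have hub : ∀ n ∈ {n : ℕ | ∃ s : Finset V, IsStableSet G ↑s ∧ s.card = n}, n ≤ S.card := by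
    rintro n ⟨s, hs, rfl⟩
    exact hmax s hs
  have hsup : stabilityNumber G = S.card := by
    unfold stabilityNumber
    exact le_antisymm (csSup_le ⟨S.card, hmem⟩ hub) (le_csSup ⟨S.card, hub⟩ hmem)
  rw [hsup, hSset, Set.ncard_coe_finset]
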